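/- Let (M,d) be a compact metric space and A : M → M(d,ℝ) an α-Hölder map with Hölder constant C₂ > 0. Let f : M → M be a map, x, p ∈ M, n ∈ ℕ, and C₁, θ, ρ > 0 with d(fʲ(x), fʲ(p)) ≤ C₁·ρ·e^{−θ·min(j, n−j)} for every j = 0,…,n. Let λ₁ ∈ ℝ, N ≥ 1 and 0 < δ < θα, and suppose there are norms ‖·‖₀,…,‖·‖_n on ℝ^d satisfying ‖u‖ ≤ ‖u‖_j ≤ N·e^{δ·min(j, n−j)}·‖u‖ for every u ∈ ℝ^d and every j, and ‖A(fʲ(x))u‖_{j+1} ≤ e^{λ₁+δ}‖u‖_j for every u ∈ ℝ^d and j = 0,…,n−1. Then there is a constant c > 0 depending only on C₁, C₂, N, θ, α, δ and λ₁ (and not on n, x, p, ρ) such that ‖A^{n−1,…,0}(p)u‖_n ≤ c·e^{ρ^α}·e^{(λ₁+δ)n}‖u‖₀ for all u, and consequently ‖A(f^{n−1}(p))⋯A(p)‖ ≤ c·N·e^{ρ^α}·e^{(λ₁+δ)n}, where A^{n−1,…,0}(p) = A(f^{n−1}(p))⋯A(f(p))A(p) and ‖·‖ is the operator norm with respect to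 the Euclidean norm. -/

import Mathlib

open Filter Topology

universe u

/-- Operator norm (w.r.t. the Euclidean norm) of a square real matrix. -/
noncomputable def matNorm {m : Type*} [Fintype m] [DecidableEq m] (B : Matrix m m ℝ) : ℝ :=
  ‖LinearMap.toContinuousLinearMap (Matrix.toEuclideanLin B)‖

/-- The cocycle generated by `A` over `f`: `Aⁿ(x) = A(f^{n-1}x) ⋯ A(f x) A(x)`. -/
def cocycle {M : Type u} {m : Type*} [Fintype m] [DecidableEq m]
    (f : M → M) (A : M → Matrix m m ℝ) : ℕ → M → Matrix m m ℝ
  | 0, _ => 1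
  | n + 1, x => cocycle f A n (f x) * A x

lemma toEucl_mul {d : ℕ} (B C : Matrix (Fin d) (Fin d) ℝ) (v : EuclideanSpace ℝ (Fin d)) :
    Matrix.toEuclideanLin (B * C) v = Matrix.toEuclideanLin B (Matrix.toEuclideanLin C v) := by
  simp [Matrix.toEuclideanLin_apply, Matrix.mulVec_mulVec]

lemma toEucl_one {d : ℕ} (v : EuclideanSpace ℝ (Fin d)) :
    Matrix.toEuclideanLin (1 : Matrix (Fin d) (Fin d) ℝ) v = v := by
  simp [Matrix.toEuclideanLin_apply]

lemma cocycle_succ' {M : Type u} {m : Type*} [Fintype m] [DecidableEq m]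
    (f : M → M) (A : M → Matrix m m ℝ) (n : ℕ) (x : M) :
    cocycle f A (n + 1) x = A (f^[n] x) * cocycle f A n x := by
  induction n generalizing x with
  | zero => simp [cocycle]
  | succ n ih =>
    show cocycle f A (n+1) (f x) * A x = _
    rw [ih (f x), ← Function.iterate_succ_apply]
    show _ = A (f^[n+1] x) * (cocycle f A n (f x) * A x)
    rw [mul_assoc]

lemma one_add_le_exp_two_sqrt {x : ℝ} (hx : 0 ≤ x) : 1 + x ≤ Real.exp (2 * Real.sqrt x) := by
  have h0 := Real.sqrt_nonneg x
  have h1 : 1 + x ≤ (1 + Real.sqrt x)^2 := by nlinarith [Real.sq_sqrt hx]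
  have h2 : 1 + Real.sqrt x ≤ Real.exp (Real.sqrt x) := by
    have := Real.add_one_le_exp (Real.sqrt x); linarith
  calc 1 + x ≤ (1 + Real.sqrt x)^2 := h1
    _ ≤ (Real.exp (Real.sqrt x))^2 := by nlinarith
    _ = Real.exp (2 * Real.sqrt x) := by rw [sq, ← Real.exp_add]; ring_nf

set_option synthInstance.maxHeartbeats 1000000 in
lemma norm_toEucl_le {d : ℕ} (B : Matrix (Fin d) (Fin d) ℝ) (v : EuclideanSpace ℝ (Fin d)) :
    ‖Matrix.toEuclideanLin B v‖ ≤ matNorm B * ‖v‖ := by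
  have := ContinuousLinearMap.le_opNorm (LinearMap.toContinuousLinearMap (Matrix.toEuclideanLin B)) v
  simpa [matNorm] using this

set_option synthInstance.maxHeartbeats 1000000 in
lemma matNorm_le_of {d : ℕ} (B : Matrix (Fin d) (Fin d) ℝ) (c : ℝ) (hc : 0 ≤ c)
    (h : ∀ v : EuclideanSpace ℝ (Fin d), ‖Matrix.toEuclideanLin B v‖ ≤ c * ‖v‖) :
    matNorm B ≤ c := by
  apply ContinuousLinearMap.opNorm_le_bound _ hc
  intro v
  simpa using h v

lemma sum_exp_neg_min_le {γ : ℝ} (hγ : 0 < γ) (n : ℕ) :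
    ∑ j ∈ Finset.range n, Real.exp (-γ * min (j:ℝ) ((n:ℝ) - j)) ≤ 2 / (1 - Real.exp (-γ)) := by
  set r := Real.exp (-γ) with hr
  have hr0 : 0 < r := Real.exp_pos _
  have hr1 : r < 1 := Real.exp_lt_one_iff.mpr (by linarith)
  have hgeo : ∀ m : ℕ, ∑ j ∈ Finset.range m, r ^ j ≤ 1 / (1 - r) := by
    intro m
    rw [geom_sum_eq (ne_of_lt hr1)]
    have heq : (r ^ m - 1) / (r - 1) = (1 - r ^ m) / (1 - r) := by
      rw [← neg_div_neg_eq]; ring_nf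
    rw [heq]
    have h1 : (0:ℝ) ≤ r ^ m := le_of_lt (pow_pos hr0 m)
    gcongr
    · linarith
  have hterm : ∀ j ∈ Finset.range n,
      Real.exp (-γ * min (j:ℝ) ((n:ℝ) - j)) ≤ r ^ j + r ^ (n - j) := by
    intro j hj
    have hj' : j < n := Finset.mem_range.mp hj
    have hcast : ((n - j : ℕ) : ℝ) = (n:ℝ) - j := by
      push_cast [Nat.cast_sub hj'.le]; ring
    rcases min_cases ((j:ℝ)) ((n:ℝ) - j) with ⟨h, _⟩ | ⟨h, _⟩
    · rw [h]
      have : Real.exp (-γ * (j:ℝ)) = r ^ j := by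
        rw [hr, ← Real.exp_nat_mul]; ring_nf
      rw [this]
      have : (0:ℝ) ≤ r ^ (n - j) := le_of_lt (pow_pos hr0 _)
      linarith
    · rw [h]
      have : Real.exp (-γ * ((n:ℝ) - j)) = r ^ (n - j) := by
        rw [hr, ← Real.exp_nat_mul, hcast]; ring_nf
      rw [this]
      have : (0:ℝ) ≤ r ^ j := le_of_lt (pow_pos hr0 _)
      linarith
  calc ∑ j ∈ Finset.range n, Real.exp (-γ * min (j:ℝ) ((n:ℝ) - j))
      ≤ ∑ j ∈ Finset.range n, (r ^ j + r ^ (n - j)) := Finset.sum_le_sum hterm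
    _ = ∑ j ∈ Finset.range n, r ^ j + ∑ j ∈ Finset.range n, r ^ (n - j) :=
        Finset.sum_add_distrib
    _ ≤ 1 / (1 - r) + 1 / (1 - r) := by
        gcongr ?_ + ?_
        · exact hgeo n
        · have hrefl : ∑ j ∈ Finset.range n, r ^ (n - j)
              = ∑ j ∈ Finset.range n, r ^ (j + 1) := by
            rw [← Finset.sum_range_reflect]
            apply Finset.sum_congr rfl
            intro j hj
            have hj' : j < n := Finset.mem_range.mp hj
            congr 1
            omega
          rw [hrefl]
          calc ∑ j ∈ Finset.range n, r ^ (j+1) ≤ ∑ j ∈ Finset.range n, r ^ j := by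
                apply Finset.sum_le_sum
                intro j _
                exact pow_le_pow_of_le_one hr0.le hr1.le (by omega)
            _ ≤ 1 / (1 - r) := hgeo n
    _ = 2 / (1 - r) := by ring

/-- **Upper bound along a shadowing periodic orbit.** There is a constant `c > 0`, depending
only on `C₁, C₂, N, θ, α, δ, λ₁` (and not on `M`, `f`, `A`, `n`, `x`, `p`, `ρ` or the norms),
such that whenever the orbit of `p` shadows the orbit of `x` as in the Anosov Closing property
(`d(fʲx, fʲp) ≤ C₁ ρ e^{-θ min(j, n-j)}` for `j = 0, …, n`), `A` is `α`-Hölder with constant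
`C₂`, and `‖·‖₀, …, ‖·‖_n` are norms with `‖u‖ ≤ ‖u‖_j ≤ N e^{δ min(j, n-j)} ‖u‖` and
`‖A(fʲx) u‖_{j+1} ≤ e^{λ₁+δ} ‖u‖_j`, then
`‖Aⁿ(p) u‖_n ≤ c e^{ρ^α} e^{(λ₁+δ)n} ‖u‖₀` and `‖Aⁿ(p)‖ ≤ c N e^{ρ^α} e^{(λ₁+δ)n}`. -/
theorem upper_bound_along_shadowing_orbit
    {d : ℕ} (C₁ C₂ N θ α δ lam₁ : ℝ)
    (hC₁ : 0 < C₁) (hC₂ : 0 < C₂) (hN : 1 ≤ N) (hθ : 0 < θ) (hα : 0 < α)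
    (hδ₀ : 0 < δ) (hδ : δ < θ * α) :
    ∃ c : ℝ, 0 < c ∧
      ∀ (M : Type u) [MetricSpace M] (A : M → Matrix (Fin d) (Fin d) ℝ),
        (∀ x y : M, matNorm (A x - A y) ≤ C₂ * dist x y ^ α) →
        ∀ (f : M → M) (x p : M) (n : ℕ) (ρ : ℝ), 0 < ρ →
        (∀ j ≤ n, dist (f^[j] x) (f^[j] p) ≤
          C₁ * ρ * Real.exp (-θ * min (j : ℝ) ((n : ℝ) - (j : ℝ)))) →
        ∀ Nj : ℕ → Seminorm ℝ (EuclideanSpace ℝ (Fin d)),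
        (∀ j ≤ n, ∀ u : EuclideanSpace ℝ (Fin d),
          ‖u‖ ≤ Nj j u ∧ Nj j u ≤ N * Real.exp (δ * min (j : ℝ) ((n : ℝ) - (j : ℝ))) * ‖u‖) →
        (∀ j < n, ∀ u : EuclideanSpace ℝ (Fin d),
          Nj (j + 1) (Matrix.toEuclideanLin (A (f^[j] x)) u) ≤ Real.exp (lam₁ + δ) * Nj j u) →
        (∀ u : EuclideanSpace ℝ (Fin d),
          Nj n (Matrix.toEuclideanLin (cocycle f A n p) u) ≤
            c * Real.exp (ρ ^ α) * Real.exp ((lam₁ + δ) * n) * Nj 0 u) ∧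
        matNorm (cocycle f A n p) ≤ c * N * Real.exp (ρ ^ α) * Real.exp ((lam₁ + δ) * n) := by
  -- constants
  set β : ℝ := θ * α - δ with hβdef
  have hβ : 0 < β := by simp [hβdef]; linarith
  set S : ℝ := 2 / (1 - Real.exp (-(β/2))) with hSdef
  have hexpβ : Real.exp (-(β/2)) < 1 := Real.exp_lt_one_iff.mpr (by linarith)
  have hS : 0 < S := by
    apply div_pos (by norm_num) (by linarith)
  set K : ℝ := N * Real.exp δ * C₂ * C₁ ^ α * Real.exp (-(lam₁ + δ)) with hKdef
  have hC₁α : (0:ℝ) < C₁ ^ α := Real.rpow_pos_of_pos hC₁ α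
  have hK : 0 < K := by
    have := Real.exp_pos δ
    have := Real.exp_pos (-(lam₁ + δ))
    positivity
  refine ⟨Real.exp (S^2 * K), Real.exp_pos _, ?_⟩
  intro M _ A hHold f x p n ρ hρ hshadow Nj hsand hcontr
  set t : ℝ := ρ ^ α with htdef
  have ht : 0 < t := Real.rpow_pos_of_pos hρ α
  set L : Matrix (Fin d) (Fin d) ℝ → EuclideanSpace ℝ (Fin d) →ₗ[ℝ] EuclideanSpace ℝ (Fin d) :=
    fun B => Matrix.toEuclideanLin B with hLdef
  -- per-step error
  set ε : ℕ → ℝ := fun j => N * Real.exp δ * C₂ * (C₁ * ρ) ^ α *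
      Real.exp (-β * min (j:ℝ) ((n:ℝ) - j)) with hεdef
  have hεnonneg : ∀ j, 0 ≤ ε j := by
    intro j
    have h1 : (0:ℝ) ≤ (C₁ * ρ) ^ α := (Real.rpow_pos_of_pos (by positivity) α).le
    have := Real.exp_pos δ
    have := Real.exp_pos (-β * min (j:ℝ) ((n:ℝ) - j))
    simp only [hεdef]
    positivity
  -- the key one-step estimate
  have hstep : ∀ k < n, ∀ v : EuclideanSpace ℝ (Fin d),
      Nj (k+1) (L (A (f^[k] p)) v) ≤ (Real.exp (lam₁ + δ) + ε k) * Nj k v := by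
    intro k hk v
    set m : ℝ := min (k:ℝ) ((n:ℝ) - k) with hmdef
    have hm0 : 0 ≤ m := by
      have h1 : (0:ℝ) ≤ (k:ℝ) := Nat.cast_nonneg k
      have h2 : (0:ℝ) ≤ (n:ℝ) - k := by
        have : (k:ℝ) ≤ n := Nat.cast_le.mpr hk.le
        linarith
      exact le_min h1 h2
    have hsplit : L (A (f^[k] p)) v = L (A (f^[k] x)) v + L (A (f^[k] p) - A (f^[k] x)) v := by
      simp only [hLdef]
      have hA : Matrix.toEuclideanLin (A (f^[k] p))
          = Matrix.toEuclideanLin (A (f^[k] x))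
            + Matrix.toEuclideanLin (A (f^[k] p) - A (f^[k] x)) := by
        rw [← map_add]
        congr 1
        abel
      rw [hA, LinearMap.add_apply]
    have h1 : Nj (k+1) (L (A (f^[k] p)) v)
        ≤ Nj (k+1) (L (A (f^[k] x)) v) + Nj (k+1) (L (A (f^[k] p) - A (f^[k] x)) v) := by
      rw [hsplit]; exact map_add_le_add _ _ _
    have h2 : Nj (k+1) (L (A (f^[k] x)) v) ≤ Real.exp (lam₁ + δ) * Nj k v := hcontr k hk v
    -- estimate the perturbation term
    have hkn : k + 1 ≤ n := hk
    have hsand' := (hsand (k+1) hkn (L (A (f^[k] p)) v - L (A (f^[k] x)) v)).2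
    have hup : Nj (k+1) (L (A (f^[k] p) - A (f^[k] x)) v)
        ≤ N * Real.exp (δ * min ((k:ℝ)+1) ((n:ℝ) - (k+1))) *
            ‖L (A (f^[k] p) - A (f^[k] x)) v‖ := by
      have := (hsand (k+1) hkn (L (A (f^[k] p) - A (f^[k] x)) v)).2
      push_cast at this
      convert this using 4 <;> ring
    have hnorm1 : ‖L (A (f^[k] p) - A (f^[k] x)) v‖
        ≤ matNorm (A (f^[k] p) - A (f^[k] x)) * ‖v‖ := norm_toEucl_le _ _
    have hdist : dist (f^[k] p) (f^[k] x) ≤ C₁ * ρ * Real.exp (-θ * m) := by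
      rw [dist_comm]
      exact hshadow k hk.le
    have hmatn : matNorm (A (f^[k] p) - A (f^[k] x)) ≤ C₂ * ((C₁ * ρ) ^ α * Real.exp (-(θ*α) * m)) := by
      have h := hHold (f^[k] p) (f^[k] x)
      have hpow : dist (f^[k] p) (f^[k] x) ^ α ≤ (C₁ * ρ * Real.exp (-θ * m)) ^ α :=
        Real.rpow_le_rpow dist_nonneg hdist hα.le
      have hexpand : (C₁ * ρ * Real.exp (-θ * m)) ^ α
          = (C₁ * ρ) ^ α * Real.exp (-(θ*α) * m) := by
        rw [Real.mul_rpow (by positivity) (Real.exp_pos _).le, ← Real.exp_mul]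
        ring_nf
      calc matNorm (A (f^[k] p) - A (f^[k] x)) ≤ C₂ * dist (f^[k] p) (f^[k] x) ^ α := h
        _ ≤ C₂ * (C₁ * ρ * Real.exp (-θ * m)) ^ α := by gcongr
        _ = C₂ * ((C₁ * ρ) ^ α * Real.exp (-(θ*α) * m)) := by rw [hexpand]
    have hvle : ‖v‖ ≤ Nj k v := (hsand k hk.le v).1
    have hmin1 : min ((k:ℝ)+1) ((n:ℝ) - (k+1)) ≤ m + 1 := by
      have : min ((k:ℝ)+1) ((n:ℝ) - (k+1)) ≤ min ((k:ℝ)+1) ((n:ℝ) - k + 1) :=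
        min_le_min (le_refl _) (by linarith)
      calc min ((k:ℝ)+1) ((n:ℝ) - (k+1)) ≤ min ((k:ℝ)+1) ((n:ℝ) - k + 1) := this
        _ = m + 1 := by rw [hmdef, ← min_add_add_right]
    have hexpmin : Real.exp (δ * min ((k:ℝ)+1) ((n:ℝ) - (k+1)))
        ≤ Real.exp δ * Real.exp (δ * m) := by
      rw [← Real.exp_add]
      apply Real.exp_le_exp.mpr
      have := mul_le_mul_of_nonneg_left hmin1 hδ₀.le
      linarith [this]
    -- combine the perturbation chain
    have hfinal2 : Nj (k+1) (L (A (f^[k] p) - A (f^[k] x)) v) ≤ ε k * Nj k v := by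
      have hNv : 0 ≤ ‖v‖ := norm_nonneg v
      have c1 : Nj (k+1) (L (A (f^[k] p) - A (f^[k] x)) v)
          ≤ N * Real.exp (δ * min ((k:ℝ)+1) ((n:ℝ) - (k+1))) *
              (C₂ * ((C₁ * ρ) ^ α * Real.exp (-(θ*α) * m)) * ‖v‖) := by
        calc Nj (k+1) (L (A (f^[k] p) - A (f^[k] x)) v)
            ≤ N * Real.exp (δ * min ((k:ℝ)+1) ((n:ℝ) - (k+1))) *
                ‖L (A (f^[k] p) - A (f^[k] x)) v‖ := hup
          _ ≤ N * Real.exp (δ * min ((k:ℝ)+1) ((n:ℝ) - (k+1))) *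
                (C₂ * ((C₁ * ρ) ^ α * Real.exp (-(θ*α) * m)) * ‖v‖) := by
              have hNpos : (0:ℝ) ≤ N * Real.exp (δ * min ((k:ℝ)+1) ((n:ℝ) - (k+1))) := by
                positivity
              apply mul_le_mul_of_nonneg_left _ hNpos
              calc ‖L (A (f^[k] p) - A (f^[k] x)) v‖
                  ≤ matNorm (A (f^[k] p) - A (f^[k] x)) * ‖v‖ := hnorm1
                _ ≤ C₂ * ((C₁ * ρ) ^ α * Real.exp (-(θ*α) * m)) * ‖v‖ := by
                    apply mul_le_mul_of_nonneg_right hmatn hNv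
      have c2 : N * Real.exp (δ * min ((k:ℝ)+1) ((n:ℝ) - (k+1))) *
              (C₂ * ((C₁ * ρ) ^ α * Real.exp (-(θ*α) * m)) * ‖v‖)
          ≤ N * (Real.exp δ * Real.exp (δ * m)) *
              (C₂ * ((C₁ * ρ) ^ α * Real.exp (-(θ*α) * m)) * ‖v‖) := by
        have hx : (0:ℝ) ≤ C₂ * ((C₁ * ρ) ^ α * Real.exp (-(θ*α) * m)) * ‖v‖ := by
          have : (0:ℝ) ≤ (C₁ * ρ) ^ α := (Real.rpow_pos_of_pos (by positivity) α).le
          positivity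
        apply mul_le_mul_of_nonneg_right _ hx
        apply mul_le_mul_of_nonneg_left hexpmin (by linarith)
      have c3 : N * (Real.exp δ * Real.exp (δ * m)) *
              (C₂ * ((C₁ * ρ) ^ α * Real.exp (-(θ*α) * m)) * ‖v‖) = ε k * ‖v‖ := by
        simp only [hεdef, ← hmdef]
        rw [show Real.exp (-β * m) = Real.exp (δ * m) * Real.exp (-(θ*α) * m) by
          rw [← Real.exp_add]; congr 1; simp [hβdef]; ring]
        ring
      have c4 : ε k * ‖v‖ ≤ ε k * Nj k v :=
        mul_le_mul_of_nonneg_left hvle (hεnonneg k)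
      linarith
    calc Nj (k+1) (L (A (f^[k] p)) v)
        ≤ Nj (k+1) (L (A (f^[k] x)) v) + Nj (k+1) (L (A (f^[k] p) - A (f^[k] x)) v) := h1
      _ ≤ Real.exp (lam₁ + δ) * Nj k v + ε k * Nj k v := add_le_add h2 hfinal2
      _ = (Real.exp (lam₁ + δ) + ε k) * Nj k v := by ring
  -- induction: product bound
  have hmain : ∀ k, k ≤ n → ∀ u : EuclideanSpace ℝ (Fin d),
      Nj k (L (cocycle f A k p) u)
        ≤ (∏ j ∈ Finset.range k, (Real.exp (lam₁ + δ) + ε j)) * Nj 0 u := by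
    intro k
    induction k with
    | zero =>
      intro _ u
      simp only [hLdef]
      rw [show cocycle f A 0 p = 1 from rfl, toEucl_one]
      simp
    | succ k ih =>
      intro hk u
      have hk' : k ≤ n := Nat.le_of_succ_le hk
      have hkn : k < n := hk
      have hprodnn : (0:ℝ) ≤ ∏ j ∈ Finset.range k, (Real.exp (lam₁ + δ) + ε j) := by
        apply Finset.prod_nonneg
        intro j _
        have := Real.exp_pos (lam₁ + δ)
        have := hεnonneg j
        linarith
      calc Nj (k+1) (L (cocycle f A (k+1) p) u)
          = Nj (k+1) (L (A (f^[k] p)) (L (cocycle f A k p) u)) := by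
            rw [cocycle_succ']
            simp only [hLdef]
            rw [toEucl_mul]
        _ ≤ (Real.exp (lam₁ + δ) + ε k) * Nj k (L (cocycle f A k p) u) :=
            hstep k hkn _
        _ ≤ (Real.exp (lam₁ + δ) + ε k) *
              ((∏ j ∈ Finset.range k, (Real.exp (lam₁ + δ) + ε j)) * Nj 0 u) := by
            apply mul_le_mul_of_nonneg_left (ih hk' u)
            have := Real.exp_pos (lam₁ + δ)
            have := hεnonneg k
            linarith
        _ = (∏ j ∈ Finset.range (k+1), (Real.exp (lam₁ + δ) + ε j)) * Nj 0 u := by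
            rw [Finset.prod_range_succ]
            ring
  -- bound the product
  have hprodbound : (∏ j ∈ Finset.range n, (Real.exp (lam₁ + δ) + ε j))
      ≤ Real.exp (S^2 * K) * Real.exp t * Real.exp ((lam₁ + δ) * n) := by
    -- rewrite each factor
    have hfac : ∀ j ∈ Finset.range n, Real.exp (lam₁ + δ) + ε j
        = Real.exp (lam₁ + δ) * (1 + K * t * Real.exp (-β * min (j:ℝ) ((n:ℝ) - j))) := by
      intro j _
      have hCρ : (C₁ * ρ) ^ α = C₁ ^ α * t := by
        rw [htdef, Real.mul_rpow hC₁.le hρ.le]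
      have hee : Real.exp (lam₁ + δ) * Real.exp (-(lam₁ + δ)) = 1 := by
        rw [← Real.exp_add, show lam₁ + δ + -(lam₁ + δ) = 0 by ring, Real.exp_zero]
      simp only [hεdef, hKdef, hCρ]
      linear_combination
        (-(N * Real.exp δ * C₂ * C₁ ^ α * t * Real.exp (-β * min (j:ℝ) ((n:ℝ) - j)))) * hee
    rw [Finset.prod_congr rfl hfac, Finset.prod_mul_distrib, Finset.prod_const,
      Finset.card_range]
    have hexppow : Real.exp (lam₁ + δ) ^ n = Real.exp ((lam₁ + δ) * n) := by
      rw [← Real.exp_nat_mul, mul_comm]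
    rw [hexppow]
    rw [mul_comm]
    apply mul_le_mul_of_nonneg_right _ (Real.exp_pos _).le
    -- now: ∏ (1 + K t e^{-β m_j}) ≤ exp(S²K) exp(t)
    have hxnn : ∀ j : ℕ, 0 ≤ K * t * Real.exp (-β * min (j:ℝ) ((n:ℝ) - j)) := by
      intro j
      have := Real.exp_pos (-β * min (j:ℝ) ((n:ℝ) - j))
      positivity
    have hsqrt : ∀ j : ℕ, Real.sqrt (K * t * Real.exp (-β * min (j:ℝ) ((n:ℝ) - j)))
        = Real.sqrt (K * t) * Real.exp (-(β/2) * min (j:ℝ) ((n:ℝ) - j)) := by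
      intro j
      have heq : K * t * Real.exp (-β * min (j:ℝ) ((n:ℝ) - j))
          = (Real.sqrt (K * t) * Real.exp (-(β/2) * min (j:ℝ) ((n:ℝ) - j)))^2 := by
        rw [mul_pow, Real.sq_sqrt (by positivity)]
        rw [show (Real.exp (-(β/2) * min (j:ℝ) ((n:ℝ) - j)))^2
            = Real.exp (-β * min (j:ℝ) ((n:ℝ) - j)) by
          rw [sq, ← Real.exp_add]; ring_nf]
      rw [heq, Real.sqrt_sq (by positivity)]
    have hprod1 : (∏ j ∈ Finset.range n, (1 + K * t * Real.exp (-β * min (j:ℝ) ((n:ℝ) - j))))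
        ≤ Real.exp (∑ j ∈ Finset.range n,
            2 * (Real.sqrt (K*t) * Real.exp (-(β/2) * min (j:ℝ) ((n:ℝ) - j)))) := by
      rw [Real.exp_sum]
      apply Finset.prod_le_prod
      · intro j _
        have := hxnn j
        linarith
      · intro j _
        have := one_add_le_exp_two_sqrt (hxnn j)
        rwa [hsqrt j] at this
    have hsum : (∑ j ∈ Finset.range n,
          2 * (Real.sqrt (K*t) * Real.exp (-(β/2) * min (j:ℝ) ((n:ℝ) - j))))
        ≤ 2 * Real.sqrt (K*t) * S := by
      rw [show (∑ j ∈ Finset.range n,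
            2 * (Real.sqrt (K*t) * Real.exp (-(β/2) * min (j:ℝ) ((n:ℝ) - j))))
          = 2 * Real.sqrt (K*t) * ∑ j ∈ Finset.range n,
              Real.exp (-(β/2) * min (j:ℝ) ((n:ℝ) - j)) by
        rw [Finset.mul_sum]; apply Finset.sum_congr rfl; intro j _; ring]
      apply mul_le_mul_of_nonneg_left _ (by positivity)
      rw [hSdef]
      exact sum_exp_neg_min_le (by linarith) n
    have hamgm : 2 * Real.sqrt (K*t) * S ≤ S^2 * K + t := by
      have h1 : Real.sqrt (K*t) = Real.sqrt K * Real.sqrt t := Real.sqrt_mul hK.le t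
      have h2 := Real.sq_sqrt hK.le
      have h3 := Real.sq_sqrt ht.le
      have h4 := Real.sqrt_nonneg K
      have h5 := Real.sqrt_nonneg t
      nlinarith [sq_nonneg (S * Real.sqrt K - Real.sqrt t)]
    calc (∏ j ∈ Finset.range n, (1 + K * t * Real.exp (-β * min (j:ℝ) ((n:ℝ) - j))))
        ≤ Real.exp (∑ j ∈ Finset.range n,
            2 * (Real.sqrt (K*t) * Real.exp (-(β/2) * min (j:ℝ) ((n:ℝ) - j)))) := hprod1
      _ ≤ Real.exp (S^2 * K + t) := by
          apply Real.exp_le_exp.mpr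
          linarith
      _ = Real.exp (S^2 * K) * Real.exp t := Real.exp_add _ _
  -- conclude
  have hfirst : ∀ u : EuclideanSpace ℝ (Fin d),
      Nj n (L (cocycle f A n p) u)
        ≤ Real.exp (S^2 * K) * Real.exp t * Real.exp ((lam₁ + δ) * n) * Nj 0 u := by
    intro u
    calc Nj n (L (cocycle f A n p) u)
        ≤ (∏ j ∈ Finset.range n, (Real.exp (lam₁ + δ) + ε j)) * Nj 0 u :=
          hmain n le_rfl u
      _ ≤ Real.exp (S^2 * K) * Real.exp t * Real.exp ((lam₁ + δ) * n) * Nj 0 u := by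
          apply mul_le_mul_of_nonneg_right hprodbound (apply_nonneg _ _)
  constructor
  · exact hfirst
  · apply matNorm_le_of
    · have := Real.exp_pos (S^2*K)
      have := Real.exp_pos t
      have := Real.exp_pos ((lam₁+δ)*n)
      positivity
    · intro v
      have h1 : ‖L (cocycle f A n p) v‖ ≤ Nj n (L (cocycle f A n p) v) :=
        (hsand n le_rfl _).1
      have h2 := hfirst v
      have h3 : Nj 0 v ≤ N * ‖v‖ := by
        have := (hsand 0 (Nat.zero_le n) v).2
        have hmin : min ((0:ℕ):ℝ) ((n:ℝ) - ((0:ℕ):ℝ)) = 0 := by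
          simp [min_eq_left, Nat.cast_nonneg]
        rw [hmin] at this
        simpa using this
      have hpos : (0:ℝ) ≤ Real.exp (S^2*K) * Real.exp t * Real.exp ((lam₁+δ)*n) := by
        positivity
      calc ‖Matrix.toEuclideanLin (cocycle f A n p) v‖
          ≤ Nj n (L (cocycle f A n p) v) := h1
        _ ≤ Real.exp (S^2 * K) * Real.exp t * Real.exp ((lam₁ + δ) * n) * Nj 0 v := h2
        _ ≤ Real.exp (S^2 * K) * Real.exp t * Real.exp ((lam₁ + δ) * n) * (N * ‖v‖) := by
            apply mul_le_mul_of_nonneg_left h3 hpos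
        _ = Real.exp (S^2 * K) * N * Real.exp t * Real.exp ((lam₁ + δ) * n) * ‖v‖ := by
            ring
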